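/- arXiv:2002.01507 — 5 statements merged into one kernel-verified Lean document; each statement's English description precedes it below -/
import Mathlib

section
/- Let Ω be a probability amplitude on ℝⁿ, M an n×n real symmetric positive definite matrix, and T₀ : ℝⁿ → ℝ a continuously differentiable function, square-integrable with respect to Ω² dq together with its first partial derivatives, with Cov(T₀,T₀) > 0 and with T₀(q)Ω(q)² → 0 as ‖q‖ → ∞. Then the mean value of the quantum potential satisfies ⟨Q⟩ ≥ (ħ²/8) · (⟨∇T₀⟩ · M ⟨∇T₀⟩) / Cov(T₀,T₀), where ⟨∇T₀⟩ ∈ ℝⁿ denotes the vector with components ⟨∂_k T₀⟩. -/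
open MeasureTheory Matrix Filter

/-- Partial derivative `∂ⱼ f` of a function on `ℝⁿ`. -/
noncomputable def pd {n : ℕ} (j : Fin n) (f : (Fin n → ℝ) → ℝ) (q : Fin n → ℝ) : ℝ :=
  fderiv ℝ f q (Pi.single j 1)

/-- Mean value `⟨T⟩ = ∫ Ω² T` with respect to the probability density `Ω²`. -/
noncomputable def expec {n : ℕ} (Ω T : (Fin n → ℝ) → ℝ) : ℝ :=
  ∫ q, (Ω q) ^ 2 * T q

/-- Covariance `Cov(T,T') = ⟨TT'⟩ - ⟨T⟩⟨T'⟩` with respect to `Ω²`. -/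
noncomputable def cov {n : ℕ} (Ω T T' : (Fin n → ℝ) → ℝ) : ℝ :=
  expec Ω (fun q => T q * T' q) - expec Ω T * expec Ω T'

/-- Mean value of the quantum potential `⟨Q⟩ = -(ħ²/2) ∫ Ω Σⱼₖ Mⱼₖ ∂ⱼ∂ₖΩ`. -/
noncomputable def meanQ {n : ℕ} (hbar : ℝ) (M : Matrix (Fin n) (Fin n) ℝ)
    (Ω : (Fin n → ℝ) → ℝ) : ℝ :=
  -(hbar ^ 2 / 2) * ∫ q, Ω q * ∑ j, ∑ k, M j k * pd j (pd k Ω) q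

lemma pd_mul {n : ℕ} (j : Fin n) (f g : (Fin n → ℝ) → ℝ) (q : Fin n → ℝ)
    (hf : DifferentiableAt ℝ f q) (hg : DifferentiableAt ℝ g q) :
    pd j (fun x => f x * g x) q = f q * pd j g q + g q * pd j f q := by
  unfold pd; rw [fderiv_fun_mul hf hg]; simp

lemma pd_sq {n : ℕ} (k : Fin n) (Ω : (Fin n → ℝ) → ℝ) (q : Fin n → ℝ)
    (hΩ : DifferentiableAt ℝ Ω q) :
    pd k (fun x => (Ω x) ^ 2) q = 2 * (Ω q * pd k Ω q) := by
  have h : (fun x => (Ω x) ^ 2) = fun x => Ω x * Ω x := by funext x; ring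
  rw [h, pd_mul k Ω Ω q hΩ hΩ]; ring

lemma pd_log {n : ℕ} (k : Fin n) (f : (Fin n → ℝ) → ℝ) (q : Fin n → ℝ)
    (hf : DifferentiableAt ℝ f q) (hfq : f q ≠ 0) :
    pd k (fun x => Real.log (f x)) q = (f q)⁻¹ * pd k f q := by
  have h := (Real.hasDerivAt_log hfq).comp_hasFDerivAt q hf.hasFDerivAt
  have h2 : (fun x => Real.log (f x)) = Real.log ∘ f := rfl
  unfold pd; rw [h2, h.fderiv]; simp [mul_comm]

/-- lower bound on the mean value of the quantum potential given by an
arbitrary function `T₀`. -/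
theorem meanQ_ge_bound {n : ℕ} (hn : 1 ≤ n) (hbar : ℝ) (hhbar : 0 < hbar)
    (Ω : (Fin n → ℝ) → ℝ) (hΩc : ContDiff ℝ 2 Ω) (hΩpos : ∀ q, 0 < Ω q)
    (hΩnorm : ∫ q, (Ω q) ^ 2 = 1)
    (M : Matrix (Fin n) (Fin n) ℝ) (hM : M.PosDef)
    (T₀ : (Fin n → ℝ) → ℝ) (hT₀ : ContDiff ℝ 1 T₀)
    -- `T₀` and its first partial derivatives are square integrable w.r.t. `Ω² dq`
    (hT₀L2 : Integrable (fun q => (Ω q) ^ 2 * (T₀ q) ^ 2))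
    (hT₀L1 : Integrable (fun q => (Ω q) ^ 2 * T₀ q))
    (hdT₀L2 : ∀ k, Integrable (fun q => (Ω q) ^ 2 * (pd k T₀ q) ^ 2))
    (hdT₀L1 : ∀ k, Integrable (fun q => (Ω q) ^ 2 * pd k T₀ q))
    (hcov : 0 < cov Ω T₀ T₀)
    -- `T₀ Ω² → 0` at infinity
    (hT₀dec : Tendsto (fun q => T₀ q * (Ω q) ^ 2) (cocompact (Fin n → ℝ)) (nhds 0))
    -- all integrals appearing converge absolutely
    (hint1 : ∀ j k, Integrable (fun q => Ω q * pd j (pd k Ω) q))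
    (hint2 : ∀ j k, Integrable (fun q => pd j Ω q * pd k Ω q))
    (hint3 : ∀ k, Integrable (fun q => (Ω q) ^ 2 * pd k (fun x => Real.log ((Ω x) ^ 2)) q))
    (hint4 : ∀ j k, Integrable (fun q => (Ω q) ^ 2 *
      (pd j (fun x => Real.log ((Ω x) ^ 2)) q * pd k (fun x => Real.log ((Ω x) ^ 2)) q)))
    -- all boundary terms in integration by parts vanish
    (hbd1 : ∀ j k, ∫ q, pd j (fun x => Ω x * pd k Ω x) q = 0)
    (hbd2 : ∀ k, ∫ q, pd k (fun x => (Ω x) ^ 2) q = 0)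
    (hbd3 : ∀ k, ∫ q, pd k (fun x => T₀ x * (Ω x) ^ 2) q = 0) :
    meanQ hbar M Ω ≥ hbar ^ 2 / 8 *
      ((fun k => expec Ω (pd k T₀)) ⬝ᵥ M.mulVec (fun k => expec Ω (pd k T₀))) /
        cov Ω T₀ T₀ := by
  -- basic differentiability / continuity facts
  have hΩd : ∀ q, DifferentiableAt ℝ Ω q :=
    fun q => (hΩc.differentiable (by norm_num)).differentiableAt
  have hpdΩc : ∀ k, ContDiff ℝ 1 (pd k Ω) := by
    intro k
    have : ContDiff ℝ 1 (fun q => fderiv ℝ Ω q (Pi.single k 1)) :=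
      (hΩc.fderiv_right (by norm_num)).clm_apply contDiff_const
    exact this
  have hpdΩd : ∀ k q, DifferentiableAt ℝ (pd k Ω) q :=
    fun k q => ((hpdΩc k).differentiable (by norm_num)).differentiableAt
  have hT₀d : ∀ q, DifferentiableAt ℝ T₀ q :=
    fun q => (hT₀.differentiable (by norm_num)).differentiableAt
  have hΩcont : Continuous Ω := hΩc.continuous
  have hpdΩcont : ∀ k, Continuous (pd k Ω) := fun k => (hpdΩc k).continuous
  have hT₀cont : Continuous T₀ := hT₀.continuous
  have hpdT₀cont : ∀ k, Continuous (pd k T₀) := by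
    intro k
    have : ContDiff ℝ 0 (fun q => fderiv ℝ T₀ q (Pi.single k 1)) :=
      (hT₀.fderiv_right (by norm_num)).clm_apply contDiff_const
    exact contDiff_zero.mp this
  have hc : (0:ℝ) < cov Ω T₀ T₀ := hcov
  have hcne : cov Ω T₀ T₀ ≠ 0 := ne_of_gt hc
  set m : ℝ := expec Ω T₀ with hm
  set c : ℝ := cov Ω T₀ T₀ with hcdef
  set v : Fin n → ℝ := fun k => expec Ω (pd k T₀) with hv
  set s : ℝ := v ⬝ᵥ M.mulVec v with hs
  -- Ω² is integrable
  have IntΩ2 : Integrable (fun q => (Ω q) ^ 2) := by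
    by_contra h
    rw [integral_undef h] at hΩnorm
    norm_num at hΩnorm
  -- Ω ∂ₖΩ is integrable
  have IntΩpd : ∀ k, Integrable (fun q => Ω q * pd k Ω q) := by
    intro k
    have key : (fun q => (Ω q) ^ 2 * pd k (fun x => Real.log ((Ω x) ^ 2)) q)
        = fun q => 2 * (Ω q * pd k Ω q) := by
      funext q
      rw [pd_log k (fun x => (Ω x) ^ 2) q ((hΩd q).pow 2) (pow_ne_zero 2 (ne_of_gt (hΩpos q))),
        pd_sq k Ω q (hΩd q)]
      have hne : Ω q ≠ 0 := ne_of_gt (hΩpos q)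
      field_simp
    have h2 : Integrable (fun q => 2 * (Ω q * pd k Ω q)) := by rw [← key]; exact hint3 k
    have h3 := h2.const_mul (2⁻¹ : ℝ)
    have : (fun q => (2:ℝ)⁻¹ * (2 * (Ω q * pd k Ω q))) = fun q => Ω q * pd k Ω q := by
      funext q; ring
    rwa [this] at h3
  -- ∫ Ω ∂ₖΩ = 0
  have K2 : ∀ k, ∫ q, Ω q * pd k Ω q = 0 := by
    intro k
    have h := hbd2 k
    have key : (fun q => pd k (fun x => (Ω x) ^ 2) q) = fun q => 2 * (Ω q * pd k Ω q) := by
      funext q; exact pd_sq k Ω q (hΩd q)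
    rw [key, integral_const_mul] at h
    linarith
  -- T₀ Ω ∂ₖΩ is integrable
  have IntT0 : ∀ k, Integrable (fun q => T₀ q * (Ω q * pd k Ω q)) := by
    intro k
    have hbound : Integrable (fun q => ((Ω q) ^ 2 * (T₀ q) ^ 2 + pd k Ω q * pd k Ω q) / 2) :=
      (hT₀L2.add (hint2 k k)).div_const 2
    refine hbound.mono ?_ ?_
    · exact ((hT₀cont.mul (hΩcont.mul (hpdΩcont k)))).aestronglyMeasurable
    · refine Filter.Eventually.of_forall fun q => ?_
      have h1 : |T₀ q * (Ω q * pd k Ω q)| = |Ω q * T₀ q| * |pd k Ω q| := by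
        rw [← abs_mul]; ring_nf
      have h2 := two_mul_le_add_sq (|Ω q * T₀ q|) (|pd k Ω q|)
      have h3 : ((Ω q) ^ 2 * (T₀ q) ^ 2 + pd k Ω q * pd k Ω q) / 2
          ≤ |((Ω q) ^ 2 * (T₀ q) ^ 2 + pd k Ω q * pd k Ω q) / 2| := le_abs_self _
      simp only [Real.norm_eq_abs]
      calc |T₀ q * (Ω q * pd k Ω q)| = |Ω q * T₀ q| * |pd k Ω q| := h1
        _ ≤ ((Ω q) ^ 2 * (T₀ q) ^ 2 + pd k Ω q * pd k Ω q) / 2 := by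
            nlinarith [sq_abs (Ω q * T₀ q), sq_abs (pd k Ω q), abs_nonneg (Ω q * T₀ q),
              abs_nonneg (pd k Ω q)]
        _ ≤ _ := h3
  -- ∫ T₀ Ω ∂ₖΩ = -vₖ/2
  have K3 : ∀ k, ∫ q, T₀ q * (Ω q * pd k Ω q) = -(v k) / 2 := by
    intro k
    have h := hbd3 k
    have key : (fun q => pd k (fun x => T₀ x * (Ω x) ^ 2) q)
        = fun q => 2 * (T₀ q * (Ω q * pd k Ω q)) + (Ω q) ^ 2 * pd k T₀ q := by
      funext q
      rw [pd_mul k T₀ (fun x => (Ω x) ^ 2) q (hT₀d q) ((hΩd q).pow 2),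
        pd_sq k Ω q (hΩd q)]
      ring
    rw [key, integral_add ((IntT0 k).const_mul 2) (hdT₀L1 k), integral_const_mul] at h
    have hvk : ∫ q, (Ω q) ^ 2 * pd k T₀ q = v k := rfl
    rw [hvk] at h
    linarith
  -- ∫ Ω ∂ⱼ∂ₖΩ = -∫ ∂ⱼΩ ∂ₖΩ
  have K1 : ∀ j k, ∫ q, Ω q * pd j (pd k Ω) q = -∫ q, pd j Ω q * pd k Ω q := by
    intro j k
    have h := hbd1 j k
    have key : (fun q => pd j (fun x => Ω x * pd k Ω x) q)
        = fun q => Ω q * pd j (pd k Ω) q + pd j Ω q * pd k Ω q := by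
      funext q
      rw [pd_mul j Ω (pd k Ω) q (hΩd q) (hpdΩd k q)]
      ring
    rw [key, integral_add (hint1 j k) (hint2 j k)] at h
    linarith
  -- meanQ = (ħ²/2) ΣΣ Mⱼₖ ∫ ∂ⱼΩ ∂ₖΩ
  have K5 : meanQ hbar M Ω
      = hbar ^ 2 / 2 * ∑ j, ∑ k, M j k * ∫ q, pd j Ω q * pd k Ω q := by
    unfold meanQ
    have key : (fun q => Ω q * ∑ j, ∑ k, M j k * pd j (pd k Ω) q)
        = fun q => ∑ j, ∑ k, M j k * (Ω q * pd j (pd k Ω) q) := by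
      funext q
      rw [Finset.mul_sum]
      refine Finset.sum_congr rfl fun j _ => ?_
      rw [Finset.mul_sum]
      refine Finset.sum_congr rfl fun k _ => ?_
      ring
    rw [key, integral_finset_sum _ fun j _ =>
      integrable_finset_sum _ fun k _ => (hint1 j k).const_mul (M j k)]
    have : ∀ j, (∫ q, ∑ k, M j k * (Ω q * pd j (pd k Ω) q))
        = ∑ k, M j k * -∫ q, pd j Ω q * pd k Ω q := by
      intro j
      rw [integral_finset_sum _ fun k _ => (hint1 j k).const_mul (M j k)]
      refine Finset.sum_congr rfl fun k _ => ?_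
      rw [integral_const_mul, K1 j k]
    rw [Finset.sum_congr rfl fun j _ => this j]
    simp only [mul_neg, Finset.sum_neg_distrib]
    ring
  set J : ℝ := ∑ j, ∑ k, M j k * ∫ q, pd j Ω q * pd k Ω q with hJ
  -- centered versions
  have Int_fΩpd : ∀ k, Integrable (fun q => (T₀ q - m) * (Ω q * pd k Ω q)) := by
    intro k
    have h : Integrable (fun q => T₀ q * (Ω q * pd k Ω q) - m * (Ω q * pd k Ω q)) :=
      (IntT0 k).sub ((IntΩpd k).const_mul m)
    have e : (fun q => T₀ q * (Ω q * pd k Ω q) - m * (Ω q * pd k Ω q))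
        = fun q => (T₀ q - m) * (Ω q * pd k Ω q) := by funext q; ring
    rwa [e] at h
  have K3' : ∀ k, ∫ q, (T₀ q - m) * (Ω q * pd k Ω q) = -(v k) / 2 := by
    intro k
    have e : (fun q => (T₀ q - m) * (Ω q * pd k Ω q))
        = fun q => T₀ q * (Ω q * pd k Ω q) - m * (Ω q * pd k Ω q) := by funext q; ring
    rw [e, integral_sub (IntT0 k) ((IntΩpd k).const_mul m), integral_const_mul, K3 k, K2 k]
    ring
  have Int_Ω2f2 : Integrable (fun q => (Ω q) ^ 2 * (T₀ q - m) ^ 2) := by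
    have h : Integrable (fun q => (Ω q) ^ 2 * (T₀ q) ^ 2 - 2 * m * ((Ω q) ^ 2 * T₀ q)
          + m ^ 2 * (Ω q) ^ 2) :=
      (hT₀L2.sub (hT₀L1.const_mul (2 * m))).add (IntΩ2.const_mul (m ^ 2))
    have e : (fun q => (Ω q) ^ 2 * (T₀ q) ^ 2 - 2 * m * ((Ω q) ^ 2 * T₀ q)
          + m ^ 2 * (Ω q) ^ 2)
        = fun q => (Ω q) ^ 2 * (T₀ q - m) ^ 2 := by funext q; ring
    rwa [e] at h
  have K4 : ∫ q, (Ω q) ^ 2 * (T₀ q - m) ^ 2 = c := by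
    have e : (fun q => (Ω q) ^ 2 * (T₀ q - m) ^ 2)
        = fun q => ((Ω q) ^ 2 * (T₀ q) ^ 2 - 2 * m * ((Ω q) ^ 2 * T₀ q))
            + m ^ 2 * (Ω q) ^ 2 := by funext q; ring
    have iA : Integrable (fun q => (Ω q) ^ 2 * (T₀ q) ^ 2 - 2 * m * ((Ω q) ^ 2 * T₀ q)) :=
      hT₀L2.sub (hT₀L1.const_mul (2 * m))
    rw [e, integral_add iA (IntΩ2.const_mul (m ^ 2)),
      integral_sub hT₀L2 (hT₀L1.const_mul (2 * m)), integral_const_mul, integral_const_mul,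
      hΩnorm]
    have e2 : ∫ q, (Ω q) ^ 2 * (T₀ q) ^ 2 = expec Ω (fun q => T₀ q * T₀ q) := by
      unfold expec
      congr 1
      funext q; ring
    have e3 : ∫ q, (Ω q) ^ 2 * T₀ q = m := rfl
    rw [e2, e3, hcdef]
    unfold cov
    ring
  -- the key quadratic form
  set G : (Fin n → ℝ) → Fin n → ℝ :=
    fun q k => 2 * pd k Ω q + ((T₀ q - m) / c) * (Ω q * v k) with hG
  set F : Fin n → Fin n → (Fin n → ℝ) → ℝ := fun j k q =>
    (4 * M j k) * (pd j Ω q * pd k Ω q)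
    + ((2 * M j k * v k / c) * ((T₀ q - m) * (Ω q * pd j Ω q))
      + ((2 * M j k * v j / c) * ((T₀ q - m) * (Ω q * pd k Ω q))
        + ((M j k * v j * v k / c ^ 2) * ((Ω q) ^ 2 * (T₀ q - m) ^ 2)))) with hF
  have hpt : ∀ q, G q ⬝ᵥ M.mulVec (G q) = ∑ j, ∑ k, F j k q := by
    intro q
    simp only [dotProduct, Matrix.mulVec, hG, hF]
    refine Finset.sum_congr rfl fun j _ => ?_
    rw [Finset.mul_sum]
    refine Finset.sum_congr rfl fun k _ => ?_
    field_simp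
    ring
  have IntF : ∀ j k, Integrable (fun q => F j k q) := fun j k =>
    ((hint2 j k).const_mul _).add (((Int_fΩpd j).const_mul _).add
      (((Int_fΩpd k).const_mul _).add (Int_Ω2f2.const_mul _)))
  have h0 : 0 ≤ ∫ q, G q ⬝ᵥ M.mulVec (G q) :=
    integral_nonneg fun q => by simpa using hM.posSemidef.dotProduct_mulVec_nonneg (G q)
  have hJK : ∀ j k, ∫ q, F j k q
      = 4 * (M j k * ∫ q, pd j Ω q * pd k Ω q) - v j * (M j k * v k) / c := by
    intro j k
    simp only [hF]
    have i0 : Integrable (fun q => (4 * M j k) * (pd j Ω q * pd k Ω q)) :=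
      (hint2 j k).const_mul _
    have i1 : Integrable (fun q =>
        2 * M j k * v k / c * ((T₀ q - m) * (Ω q * pd j Ω q))) :=
      (Int_fΩpd j).const_mul _
    have i2 : Integrable (fun q =>
        2 * M j k * v j / c * ((T₀ q - m) * (Ω q * pd k Ω q))) :=
      (Int_fΩpd k).const_mul _
    have i3 : Integrable (fun q =>
        M j k * v j * v k / c ^ 2 * ((Ω q) ^ 2 * (T₀ q - m) ^ 2)) :=
      Int_Ω2f2.const_mul _
    have i23 : Integrable (fun q =>
        2 * M j k * v j / c * ((T₀ q - m) * (Ω q * pd k Ω q))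
        + M j k * v j * v k / c ^ 2 * ((Ω q) ^ 2 * (T₀ q - m) ^ 2)) := i2.add i3
    have i123 : Integrable (fun q =>
        2 * M j k * v k / c * ((T₀ q - m) * (Ω q * pd j Ω q))
        + (2 * M j k * v j / c * ((T₀ q - m) * (Ω q * pd k Ω q))
          + M j k * v j * v k / c ^ 2 * ((Ω q) ^ 2 * (T₀ q - m) ^ 2))) := i1.add i23
    rw [integral_add i0 i123, integral_add i1 i23, integral_add i2 i3,
      integral_const_mul, integral_const_mul, integral_const_mul, integral_const_mul,
      K3' j, K3' k, K4]
    field_simp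
    ring
  have hsum : ∫ q, G q ⬝ᵥ M.mulVec (G q) = 4 * J - s / c := by
    simp only [hpt]
    rw [integral_finset_sum _ fun j _ => integrable_finset_sum _ fun k _ => IntF j k]
    rw [Finset.sum_congr rfl fun j _ => integral_finset_sum _ fun k _ => IntF j k]
    rw [Finset.sum_congr rfl fun j _ => Finset.sum_congr rfl fun k _ => hJK j k]
    have e1 : ∑ j, ∑ k, (4 * (M j k * ∫ q, pd j Ω q * pd k Ω q)
          - v j * (M j k * v k) / c)
        = (∑ j, ∑ k, 4 * (M j k * ∫ q, pd j Ω q * pd k Ω q))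
          - ∑ j, ∑ k, v j * (M j k * v k) / c := by
      rw [← Finset.sum_sub_distrib]
      exact Finset.sum_congr rfl fun j _ => by rw [← Finset.sum_sub_distrib]
    rw [e1]
    congr 1
    · rw [hJ, Finset.mul_sum]
      exact Finset.sum_congr rfl fun j _ => by rw [Finset.mul_sum]
    · rw [hs]
      simp only [dotProduct, Matrix.mulVec, Finset.sum_div, Finset.mul_sum]
  have hfinal : 0 ≤ 4 * J - s / c := by rw [← hsum]; exact h0
  rw [ge_iff_le, K5]
  have h8 : s / c ≤ 4 * J := by linarith
  have hb : (0:ℝ) < hbar ^ 2 := by positivity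
  calc hbar ^ 2 / 8 * s / c = hbar ^ 2 / 8 * (s / c) := by ring
    _ ≤ hbar ^ 2 / 8 * (4 * J) :=
        mul_le_mul_of_nonneg_left h8 (by positivity)
    _ = hbar ^ 2 / 2 * J := by ring
end

section
/- Let Ω be a probability amplitude on ℝⁿ and M an n×n real symmetric positive definite matrix. Then the mean value of the quantum potential is strictly positive: ⟨Q⟩ > 0. (Note that ∇Ω cannot vanish identically, since Ω² integrates to 1 and Ω tends to 0 at infinity.) -/
open MeasureTheory Matrix Filter

/-- the mean value of the quantum potential is strictly positive. -/
theorem meanQ_pos {n : ℕ} (hn : 1 ≤ n) (hbar : ℝ) (hhbar : 0 < hbar)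
    (Ω : (Fin n → ℝ) → ℝ) (hΩc : ContDiff ℝ 2 Ω) (hΩpos : ∀ q, 0 < Ω q)
    (hΩnorm : ∫ q, (Ω q) ^ 2 = 1)
    (M : Matrix (Fin n) (Fin n) ℝ) (hM : M.PosDef)
    -- all integrals appearing converge absolutely
    (hint1 : ∀ j k, Integrable (fun q => Ω q * pd j (pd k Ω) q))
    (hint2 : ∀ j k, Integrable (fun q => pd j Ω q * pd k Ω q))
    -- all boundary terms in integration by parts vanish
    (hbd1 : ∀ j k, ∫ q, pd j (fun x => Ω x * pd k Ω x) q = 0) :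
    0 < meanQ hbar M Ω := by
  have hΩd : Differentiable ℝ Ω := hΩc.differentiable (by norm_num)
  -- the partial derivatives are C¹
  have hfd : ContDiff ℝ 1 (fun x => fderiv ℝ Ω x) := by
    exact (contDiff_succ_iff_fderiv.mp (by exact_mod_cast hΩc : ContDiff ℝ (1+1) Ω)).2.2
  have hpdc : ∀ k : Fin n, ContDiff ℝ 1 (pd k Ω) := fun k =>
    hfd.clm_apply contDiff_const
  -- integration by parts
  have key : ∀ j k, ∫ q, Ω q * pd j (pd k Ω) q = - ∫ q, pd j Ω q * pd k Ω q := by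
    intro j k
    have hprod : ∀ q, pd j (fun x => Ω x * pd k Ω x) q
        = Ω q * pd j (pd k Ω) q + pd j Ω q * pd k Ω q := by
      intro q
      show (fderiv ℝ (fun x => Ω x * pd k Ω x) q) (Pi.single j 1) = _
      rw [fderiv_fun_mul (hΩd q) (((hpdc k).differentiable one_ne_zero) q)]
      simp only [ContinuousLinearMap.add_apply, ContinuousLinearMap.coe_smul',
        Pi.smul_apply, smul_eq_mul, pd]
      ring
    have h0 : ∫ q, (Ω q * pd j (pd k Ω) q + pd j Ω q * pd k Ω q) = 0 := by
      rw [← hbd1 j k]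
      exact integral_congr_ae (Filter.Eventually.of_forall fun q => (hprod q).symm)
    rw [integral_add (hint1 j k) (hint2 j k)] at h0
    linarith
  -- the nonnegative integrand
  set F : (Fin n → ℝ) → ℝ := fun q => ∑ j, ∑ k, M j k * (pd j Ω q * pd k Ω q) with hFdef
  have hFint : Integrable F := by
    apply integrable_finset_sum
    intro j _
    apply integrable_finset_sum
    intro k _
    exact (hint2 j k).const_mul _
  have hFq : ∀ q, F q = dotProduct (fun j => pd j Ω q) (M *ᵥ (fun j => pd j Ω q)) := by
    intro q
    simp only [hFdef, dotProduct, Matrix.mulVec, Finset.mul_sum]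
    congr 1; funext j; congr 1; funext k; ring
  have hFnonneg : ∀ q, 0 ≤ F q := by
    intro q
    rw [hFq q]
    simpa using hM.posSemidef.dotProduct_mulVec_nonneg (fun j => pd j Ω q)
  -- rewrite meanQ
  have hmean : meanQ hbar M Ω = (hbar ^ 2 / 2) * ∫ q, F q := by
    unfold meanQ
    have h1 : (fun q => Ω q * ∑ j, ∑ k, M j k * pd j (pd k Ω) q)
        = fun q => ∑ j, ∑ k, M j k * (Ω q * pd j (pd k Ω) q) := by
      funext q
      rw [Finset.mul_sum]
      refine Finset.sum_congr rfl fun j _ => ?_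
      rw [Finset.mul_sum]
      exact Finset.sum_congr rfl fun k _ => by ring
    rw [h1]
    rw [integral_finset_sum _ (fun j _ => integrable_finset_sum _
          (fun k _ => (hint1 j k).const_mul (M j k)))]
    have h2 : ∀ j : Fin n, ∫ q, ∑ k, M j k * (Ω q * pd j (pd k Ω) q)
        = ∑ k, M j k * (- ∫ q, pd j Ω q * pd k Ω q) := by
      intro j
      rw [integral_finset_sum _ (fun k _ => (hint1 j k).const_mul _)]
      refine Finset.sum_congr rfl fun k _ => ?_
      rw [MeasureTheory.integral_const_mul, key j k]
    rw [Finset.sum_congr rfl fun j _ => h2 j]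
    have h3 : ∫ q, F q = ∑ j, ∑ k, M j k * ∫ q, pd j Ω q * pd k Ω q := by
      rw [hFdef]
      rw [integral_finset_sum _ (fun j _ => integrable_finset_sum _
            (fun k _ => (hint2 j k).const_mul (M j k)))]
      refine Finset.sum_congr rfl fun j _ => ?_
      rw [integral_finset_sum _ (fun k _ => (hint2 j k).const_mul _)]
      exact Finset.sum_congr rfl fun k _ => (MeasureTheory.integral_const_mul _ _)
    rw [h3]
    simp only [mul_neg, Finset.sum_neg_distrib]
    ring
  -- the integral of F is positive
  have hFcont : Continuous F := by
    apply continuous_finset_sum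
    intro j _
    apply continuous_finset_sum
    intro k _
    exact continuous_const.mul
      ((((hpdc j).continuous)).mul ((hpdc k).continuous))
  have hint_pos : 0 < ∫ q, F q := by
    rcases lt_or_eq_of_le (integral_nonneg (f := F) hFnonneg) with h | h
    · exact h
    exfalso
    -- then F = 0 a.e., hence everywhere, hence ∇Ω ≡ 0, hence Ω constant
    have hae : F =ᵐ[volume] 0 := by
      rw [← integral_eq_zero_iff_of_nonneg (f := F) hFnonneg hFint]
      exact h.symm
    have hFzero : F = fun _ => (0 : ℝ) := by
      rw [← Continuous.ae_eq_iff_eq volume hFcont continuous_const]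
      filter_upwards [hae] with q hq using hq
    have hgrad : ∀ q (j : Fin n), pd j Ω q = 0 := by
      intro q j
      by_contra hne
      have hx : (fun j => pd j Ω q) ≠ 0 := by
        intro h0
        exact hne (congrFun h0 j)
      have := hM.dotProduct_mulVec_pos hx
      rw [star_trivial, ← hFq q] at this
      have h00 : F q = 0 := congrFun hFzero q
      rw [h00] at this
      exact lt_irrefl 0 this
    have hfderiv0 : ∀ q, fderiv ℝ Ω q = 0 := by
      intro q
      ext v
      have hv : v = ∑ j, v j • (Pi.single j 1 : Fin n → ℝ) := by
        funext i
        simp [Pi.single_apply, Finset.sum_apply, mul_comm]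
      conv_lhs => rw [hv]
      rw [map_sum]
      simp only [_root_.map_smul]
      have : ∀ j : Fin n, fderiv ℝ Ω q (Pi.single j 1) = 0 := fun j => hgrad q j
      simp [this]
    have hconst : ∀ q, Ω q = Ω 0 :=
      fun q => is_const_of_fderiv_eq_zero hΩd hfderiv0 q 0
    have : ∫ q : Fin n → ℝ, (Ω q) ^ 2 = 0 := by
      have : (fun q : Fin n → ℝ => (Ω q) ^ 2) = fun _ => (Ω 0) ^ 2 := by
        funext q; rw [hconst q]
      rw [this, integral_const]
      have hvol : (volume : Measure (Fin n → ℝ)) Set.univ = ⊤ := by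
        rw [← Set.pi_univ Set.univ, volume_pi_pi]
        simp [Real.volume_univ]
        omega
      rw [measureReal_def, hvol]
      simp
    rw [hΩnorm] at this
    norm_num at this
  rw [hmean]
  positivity
end

section
/- Let Ω be a probability amplitude on ℝⁿ, M an n×n real symmetric positive definite matrix, and define the n×n matrix Q := A·M where A_{jk} := −∫ Ω² ∂_j∂_k ln(Ω²) dq. Then every eigenvalue of Q is real and nonnegative, and the mean value of the quantum potential satisfies ⟨Q⟩ ≥ (ħ²/8) λ_max(Q), where λ_max(Q) is the largest eigenvalue of the matrix Q. -/
open MeasureTheory Matrix Filter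

/-- The matrix `Aⱼₖ = -∫ Ω² ∂ⱼ∂ₖ ln Ω²`. -/
noncomputable def matA {n : ℕ} (Ω : (Fin n → ℝ) → ℝ) : Matrix (Fin n) (Fin n) ℝ :=
  Matrix.of fun j k => -∫ q, (Ω q) ^ 2 * pd j (pd k (fun x => Real.log ((Ω x) ^ 2))) q

section aux
variable {n : ℕ} {Ω : (Fin n → ℝ) → ℝ}

lemma hasFDerivAt_pd (hΩc : ContDiff ℝ 2 Ω) (k : Fin n) (q : Fin n → ℝ) :
    HasFDerivAt (pd k Ω) ((fderiv ℝ (fderiv ℝ Ω) q).flip (Pi.single k 1)) q := by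
  have hF : Differentiable ℝ (fderiv ℝ Ω) :=
    (hΩc.fderiv_right (m := 1) (by norm_num)).differentiable (by norm_num)
  have h := (hF q).hasFDerivAt.clm_apply (hasFDerivAt_const (Pi.single k (1:ℝ)) q)
  simp only [ContinuousLinearMap.comp_zero, zero_add] at h
  exact h

lemma pd_log_sq (hΩc : ContDiff ℝ 2 Ω) (hΩpos : ∀ q, 0 < Ω q) (k : Fin n) (x : Fin n → ℝ) :
    pd k (fun y => Real.log (Ω y ^ 2)) x = 2 * pd k Ω x * (Ω x)⁻¹ := by
  have hΩd : Differentiable ℝ Ω := hΩc.differentiable (by norm_num)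
  have hsq : HasFDerivAt (fun y => Ω y ^ 2) ((2 * Ω x) • fderiv ℝ Ω x) x := by
    have h := ((hΩd x).hasFDerivAt.mul (hΩd x).hasFDerivAt)
    have h2 : (2 * Ω x) • fderiv ℝ Ω x = Ω x • fderiv ℝ Ω x + Ω x • fderiv ℝ Ω x := by
      rw [two_mul, add_smul]
    rw [h2]
    simp only [pow_two]; exact h
  have hne : Ω x ^ 2 ≠ 0 := pow_ne_zero 2 (hΩpos x).ne'
  have hlog : HasFDerivAt (fun y => Real.log (Ω y ^ 2))
      ((Ω x ^ 2)⁻¹ • ((2 * Ω x) • fderiv ℝ Ω x)) x :=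
    by have := (Real.hasDerivAt_log hne).comp_hasFDerivAt x hsq; exact this
  have : pd k (fun y => Real.log (Ω y ^ 2)) x
      = ((Ω x ^ 2)⁻¹ • ((2 * Ω x) • fderiv ℝ Ω x)) (Pi.single k 1) := by
    rw [pd, hlog.fderiv]
  rw [this]
  have hΩne : Ω x ≠ 0 := (hΩpos x).ne'
  have hpd : (fderiv ℝ Ω x) (Pi.single k 1) = pd k Ω x := rfl
  simp only [ContinuousLinearMap.coe_smul', Pi.smul_apply, smul_eq_mul, hpd]
  field_simp

lemma key_pointwise (hΩc : ContDiff ℝ 2 Ω) (hΩpos : ∀ q, 0 < Ω q) (j k : Fin n) (q : Fin n → ℝ) :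
    Ω q ^ 2 * pd j (pd k (fun y => Real.log (Ω y ^ 2))) q
      = 2 * (Ω q * pd j (pd k Ω) q) - 2 * (pd j Ω q * pd k Ω q) := by
  have hΩd : Differentiable ℝ Ω := hΩc.differentiable (by norm_num)
  have hrw : pd k (fun y => Real.log (Ω y ^ 2)) = fun x => 2 * pd k Ω x * (Ω x)⁻¹ :=
    funext (pd_log_sq hΩc hΩpos k)
  rw [hrw]
  have hc : HasFDerivAt (fun x => 2 * pd k Ω x)
      ((2:ℝ) • ((fderiv ℝ (fderiv ℝ Ω) q).flip (Pi.single k 1))) q :=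
    (hasFDerivAt_pd hΩc k q).const_mul 2
  have hinv : HasFDerivAt (fun x => (Ω x)⁻¹) ((-(Ω q ^ 2)⁻¹) • fderiv ℝ Ω q) q :=
    (hasDerivAt_inv (hΩpos q).ne').comp_hasFDerivAt q (hΩd q).hasFDerivAt
  have hmul := hc.mul hinv
  have hjk : pd j (pd k Ω) q = ((fderiv ℝ (fderiv ℝ Ω) q).flip (Pi.single k 1)) (Pi.single j 1) := by
    rw [pd, (hasFDerivAt_pd hΩc k q).fderiv]
  have hpd : (fderiv ℝ Ω q) (Pi.single j 1) = pd j Ω q := rfl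
  have hval : pd j (fun x => 2 * pd k Ω x * (Ω x)⁻¹) q
      = (2 * pd k Ω q) * (-(Ω q ^ 2)⁻¹ * pd j Ω q) + (Ω q)⁻¹ * (2 * pd j (pd k Ω) q) := by
    rw [pd, HasFDerivAt.fderiv (f := fun x => 2 * pd k Ω x * (Ω x)⁻¹) hmul]
    simp only [ContinuousLinearMap.add_apply, ContinuousLinearMap.coe_smul', Pi.smul_apply,
      smul_eq_mul, hpd, hjk]
  rw [hval]
  have hΩne : Ω q ≠ 0 := (hΩpos q).ne'
  field_simp
  ring

end aux

section aux2
variable {n : ℕ}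

-- trace = sum of eigenvalues for real symmetric
lemma trace_eq_sum_eig {S : Matrix (Fin n) (Fin n) ℝ} (hS : S.IsHermitian) :
    S.trace = ∑ i, hS.eigenvalues i := by
  simpa using hS.trace_eq_sum_eigenvalues

-- spectrum over ℂ of mapped real symmetric matrix
lemma spec_complex {S : Matrix (Fin n) (Fin n) ℝ} (hS : S.IsHermitian) :
    spectrum ℂ (S.map (Complex.ofReal : ℝ → ℂ))
      = Set.range (fun i => (hS.eigenvalues i : ℂ)) := by
  classical
  set U : Matrix (Fin n) (Fin n) ℝ := (hS.eigenvectorUnitary : Matrix (Fin n) (Fin n) ℝ) with hU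
  have hUU : star U * U = 1 := by
    simpa [hU] using (Matrix.mem_unitaryGroup_iff').mp (hS.eigenvectorUnitary).2
  have hUU' : U * star U = 1 := by
    simpa [hU] using (Matrix.mem_unitaryGroup_iff).mp (hS.eigenvectorUnitary).2
  set φ := (Complex.ofRealHom.mapMatrix : Matrix (Fin n) (Fin n) ℝ →+* Matrix (Fin n) (Fin n) ℂ)
  have hmap : ∀ A : Matrix (Fin n) (Fin n) ℝ, A.map (Complex.ofReal : ℝ → ℂ) = φ A := fun _ => rfl
  set w : (Matrix (Fin n) (Fin n) ℂ)ˣ :=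
    ⟨φ U, φ (star U), by rw [← _root_.map_mul, hUU']; simp, by rw [← _root_.map_mul, hUU]; simp⟩ with hw
  have hsp : S = U * (diagonal (RCLike.ofReal ∘ hS.eigenvalues)) * star U := hS.spectral_theorem
  have : φ S = (↑w : Matrix (Fin n) (Fin n) ℂ) * φ (diagonal (RCLike.ofReal ∘ hS.eigenvalues)) * (↑w⁻¹ : Matrix (Fin n) (Fin n) ℂ) := by
    have h2 := congrArg φ hsp
    rw [h2, _root_.map_mul, _root_.map_mul]; rfl
  rw [hmap, this, spectrum.units_conjugate]
  have hd : φ (diagonal (RCLike.ofReal ∘ hS.eigenvalues))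
      = diagonal (fun i => (hS.eigenvalues i : ℂ)) := by
    rw [← hmap, Matrix.diagonal_map (by simp)]
    simp [Function.comp]
  rw [hd, spectrum_diagonal]

end aux2

/-- every eigenvalue of `Q = A⋅M` is real and nonnegative and
`⟨Q⟩ ≥ (ħ²/8) λmax(Q)`. -/
theorem meanQ_ge_eigenvalue_bound {n : ℕ} (hn : 1 ≤ n) (hbar : ℝ) (hhbar : 0 < hbar)
    (Ω : (Fin n → ℝ) → ℝ) (hΩc : ContDiff ℝ 2 Ω) (hΩpos : ∀ q, 0 < Ω q)
    (hΩnorm : ∫ q, (Ω q) ^ 2 = 1)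
    (M : Matrix (Fin n) (Fin n) ℝ) (hM : M.PosDef)
    -- all integrals appearing converge absolutely
    (hint1 : ∀ j k, Integrable (fun q => Ω q * pd j (pd k Ω) q))
    (hint2 : ∀ j k, Integrable (fun q => pd j Ω q * pd k Ω q))
    (hint3 : ∀ j k, Integrable (fun q =>
      (Ω q) ^ 2 * pd j (pd k (fun x => Real.log ((Ω x) ^ 2))) q))
    (hint4 : ∀ j k, Integrable (fun q => (Ω q) ^ 2 *
      (pd j (fun x => Real.log ((Ω x) ^ 2)) q * pd k (fun x => Real.log ((Ω x) ^ 2)) q)))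
    -- all boundary terms in integration by parts vanish
    (hbd1 : ∀ j k, ∫ q, pd j (fun x => Ω x * pd k Ω x) q = 0)
    (hbd2 : ∀ k, ∫ q, pd k (fun x => (Ω x) ^ 2) q = 0) :
    (∀ μ ∈ spectrum ℂ ((matA Ω * M).map (Complex.ofReal : ℝ → ℂ)),
      μ.im = 0 ∧ 0 ≤ μ.re) ∧
    ∃ lmax ∈ spectrum ℝ (matA Ω * M),
      (∀ r ∈ spectrum ℝ (matA Ω * M), r ≤ lmax) ∧
      meanQ hbar M Ω ≥ hbar ^ 2 / 8 * lmax := by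
  classical
  haveI : Nonempty (Fin n) := ⟨⟨0, hn⟩⟩
  have hΩd : Differentiable ℝ Ω := hΩc.differentiable (by norm_num)
  set G : Matrix (Fin n) (Fin n) ℝ := Matrix.of fun j k => ∫ q, pd j Ω q * pd k Ω q with hG
  -- integration by parts
  have hibp : ∀ j k, (∫ q, Ω q * pd j (pd k Ω) q) = - G j k := by
    intro j k
    have hpt : ∀ q, pd j (fun x => Ω x * pd k Ω x) q
        = pd j Ω q * pd k Ω q + Ω q * pd j (pd k Ω) q := by
      intro q
      have h := (hΩd q).hasFDerivAt.mul (hasFDerivAt_pd hΩc k q)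
      have : pd j (fun x => Ω x * pd k Ω x) q
          = (Ω q • ((fderiv ℝ (fderiv ℝ Ω) q).flip (Pi.single k 1))
              + pd k Ω q • fderiv ℝ Ω q) (Pi.single j 1) := by
        rw [pd, HasFDerivAt.fderiv (f := fun x => Ω x * pd k Ω x) h]
      rw [this]
      have h1 : ((fderiv ℝ (fderiv ℝ Ω) q).flip (Pi.single k 1)) (Pi.single j 1)
          = pd j (pd k Ω) q := by rw [pd, (hasFDerivAt_pd hΩc k q).fderiv]
      have h2 : (fderiv ℝ Ω q) (Pi.single j 1) = pd j Ω q := rfl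
      simp only [ContinuousLinearMap.add_apply, ContinuousLinearMap.coe_smul', Pi.smul_apply,
        smul_eq_mul, h1, h2]
      ring
    have h0 := hbd1 j k
    rw [integral_congr_ae (Filter.EventuallyEq.of_eq (funext hpt)),
      integral_add (hint2 j k) (hint1 j k)] at h0
    have : G j k = ∫ q, pd j Ω q * pd k Ω q := rfl
    rw [this]; linarith
  -- matA = 4 • G
  have hA4 : matA Ω = (4:ℝ) • G := by
    ext j k
    have h1 : matA Ω j k = -∫ q, (Ω q) ^ 2 * pd j (pd k (fun x => Real.log ((Ω x) ^ 2))) q := rfl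
    rw [h1, integral_congr_ae (Filter.EventuallyEq.of_eq (funext (key_pointwise hΩc hΩpos j k))),
      integral_sub ((hint1 j k).const_mul 2) ((hint2 j k).const_mul 2),
      integral_const_mul, integral_const_mul, hibp j k]
    have : G j k = ∫ q, pd j Ω q * pd k Ω q := rfl
    simp only [Matrix.smul_apply, smul_eq_mul]
    rw [← this]; ring
  -- G symmetric and PSD
  have hGsym : G.IsHermitian := by
    refine Matrix.IsHermitian.ext fun i j => ?_
    show star (G j i) = G i j
    rw [star_trivial]
    show (∫ q, pd j Ω q * pd i Ω q) = ∫ q, pd i Ω q * pd j Ω q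
    simp_rw [mul_comm]
  have hGquad : ∀ x : Fin n → ℝ, 0 ≤ star x ⬝ᵥ G *ᵥ x := by
    intro x
    have key : x ⬝ᵥ G *ᵥ x = ∫ q, (∑ i, x i * pd i Ω q) ^ 2 := by
      have h1 : ∀ q, (∑ i, x i * pd i Ω q) ^ 2
          = ∑ i, ∑ j, (x i * x j) * (pd i Ω q * pd j Ω q) := by
        intro q
        rw [sq, Finset.sum_mul_sum]
        exact Finset.sum_congr rfl fun i _ => Finset.sum_congr rfl fun j _ => by ring
      simp_rw [h1]
      rw [integral_finset_sum _ (fun i _ =>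
        integrable_finset_sum _ (fun j _ => ((hint2 i j).const_mul _)))]
      simp_rw [integral_finset_sum _ (fun j _ => ((hint2 _ j).const_mul _)),
        integral_const_mul]
      simp only [dotProduct, Matrix.mulVec, dotProduct, Finset.mul_sum]
      exact Finset.sum_congr rfl fun i _ => Finset.sum_congr rfl fun j _ => by
        show x i * (G i j * x j) = x i * x j * ∫ q, pd i Ω q * pd j Ω q
        have : G i j = ∫ q, pd i Ω q * pd j Ω q := rfl
        rw [this]; ring
    rw [star_trivial, key]
    exact integral_nonneg fun q => sq_nonneg _
  have hGpsd : G.PosSemidef := Matrix.PosSemidef.of_dotProduct_mulVec_nonneg hGsym hGquad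
  have hApsd : (matA Ω).PosSemidef := by
    rw [hA4]
    refine Matrix.PosSemidef.of_dotProduct_mulVec_nonneg ?_ ?_
    · refine Matrix.IsHermitian.ext fun i j => ?_
      show star ((4:ℝ) * G j i) = (4:ℝ) * G i j
      rw [star_trivial]
      have h := hGsym.apply i j
      rw [star_trivial] at h
      rw [h]
    · intro x
      have : star x ⬝ᵥ ((4:ℝ) • G) *ᵥ x = 4 * (star x ⬝ᵥ G *ᵥ x) := by
        rw [Matrix.smul_mulVec, dotProduct_smul, smul_eq_mul]
      rw [this]
      have := hGquad x
      linarith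
  -- square root of M
  have hMps := hM.posSemidef
  set B := (open MatrixOrder in CFC.sqrt M) with hB
  have hBB : B * B = M := (open MatrixOrder in CFC.sqrt_mul_sqrt_self M hMps.nonneg)
  have hBH : Bᴴ = B := (open MatrixOrder in (CFC.sqrt_nonneg M).posSemidef.isHermitian)
  have hBu : IsUnit B := by
    have hdet : B.det * B.det = M.det := by rw [← Matrix.det_mul, hBB]
    have hMdet := hM.det_pos
    have hBne : B.det ≠ 0 := by
      intro h0; rw [h0, mul_zero] at hdet; linarith
    exact (Matrix.isUnit_iff_isUnit_det _).mpr hBne.isUnit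
  set u := hBu.unit with hu'
  have hu : (↑u : Matrix (Fin n) (Fin n) ℝ) = B := hBu.unit_spec
  set S := B * matA Ω * B with hS
  have hSpsd : S.PosSemidef := by
    have h := hApsd.mul_mul_conjTranspose_same B
    rwa [hBH] at h
  have hSherm : S.IsHermitian := hSpsd.1
  have hM' : (↑u : Matrix (Fin n) (Fin n) ℝ) * (↑u : Matrix (Fin n) (Fin n) ℝ) = M := by
    rw [hu]; exact hBB
  have hconj : matA Ω * M
      = (↑u⁻¹ : Matrix (Fin n) (Fin n) ℝ) * S * (↑u : Matrix (Fin n) (Fin n) ℝ) := by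
    have h1 : S = (↑u : Matrix (Fin n) (Fin n) ℝ)
        * (matA Ω * (↑u : Matrix (Fin n) (Fin n) ℝ)) := by rw [hS, hu, mul_assoc]
    rw [h1, Units.inv_mul_cancel_left, mul_assoc, hM']
  have hspecR : spectrum ℝ (matA Ω * M) = spectrum ℝ S := by
    rw [hconj]
    simpa using spectrum.units_conjugate (u := u⁻¹) (a := S)
  have hspecS : spectrum ℝ S = Set.range hSherm.eigenvalues :=
    hSherm.spectrum_real_eq_range_eigenvalues
  have hevnonneg : ∀ i, 0 ≤ hSherm.eigenvalues i := hSpsd.eigenvalues_nonneg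
  -- complex part
  constructor
  · intro μ hμ
    set φ := (Complex.ofRealHom.mapMatrix :
      Matrix (Fin n) (Fin n) ℝ →+* Matrix (Fin n) (Fin n) ℂ)
    set v : (Matrix (Fin n) (Fin n) ℂ)ˣ :=
      ⟨φ ↑u, φ (↑(u⁻¹) : Matrix (Fin n) (Fin n) ℝ),
        by rw [← _root_.map_mul, Units.mul_inv]; simp,
        by rw [← _root_.map_mul, Units.inv_mul]; simp⟩ with hv
    have hφ : ∀ A : Matrix (Fin n) (Fin n) ℝ, A.map (Complex.ofReal : ℝ → ℂ) = φ A := fun _ => rfl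
    have hconjC' : (matA Ω * M).map (Complex.ofReal : ℝ → ℂ)
        = (↑v⁻¹ : Matrix (Fin n) (Fin n) ℂ) * (S.map Complex.ofReal)
          * (↑v : Matrix (Fin n) (Fin n) ℂ) := by
      rw [hφ, hconj, _root_.map_mul, _root_.map_mul]; rfl
    rw [hconjC'] at hμ
    have : spectrum ℂ ((↑v⁻¹ : Matrix (Fin n) (Fin n) ℂ) * (S.map Complex.ofReal)
          * (↑v : Matrix (Fin n) (Fin n) ℂ))
        = spectrum ℂ (S.map Complex.ofReal) := by
      simpa using spectrum.units_conjugate (u := v⁻¹) (a := S.map Complex.ofReal)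
    rw [this, spec_complex hSherm] at hμ
    obtain ⟨i, hi⟩ := hμ
    constructor
    · rw [← hi]; simp
    · rw [← hi]; simpa using hevnonneg i
  -- real part
  · obtain ⟨i0, -, hi0⟩ := Finset.exists_mem_eq_sup' (Finset.univ_nonempty (α := Fin n))
      hSherm.eigenvalues
    set lmax := Finset.univ.sup' Finset.univ_nonempty hSherm.eigenvalues with hlmax
    refine ⟨lmax, ?_, ?_, ?_⟩
    · rw [hspecR, hspecS]; exact ⟨i0, hi0.symm⟩
    · intro r hr
      rw [hspecR, hspecS] at hr
      obtain ⟨i, hi⟩ := hr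
      rw [← hi]
      exact Finset.le_sup' _ (Finset.mem_univ i)
    · -- meanQ ≥ ħ²/8 * lmax
      have hmean : meanQ hbar M Ω = hbar ^ 2 / 2 * ∑ j, ∑ k, M j k * G j k := by
        rw [meanQ]
        have hpt : ∀ q, Ω q * ∑ j, ∑ k, M j k * pd j (pd k Ω) q
            = ∑ j, ∑ k, M j k * (Ω q * pd j (pd k Ω) q) := by
          intro q
          rw [Finset.mul_sum]
          exact Finset.sum_congr rfl fun j _ => by
            rw [Finset.mul_sum]
            exact Finset.sum_congr rfl fun k _ => by ring
        rw [integral_congr_ae (Filter.EventuallyEq.of_eq (funext hpt)),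
          integral_finset_sum _ (fun j _ =>
            integrable_finset_sum _ (fun k _ => ((hint1 j k).const_mul (M j k))))]
        simp_rw [integral_finset_sum _ (fun k _ => ((hint1 _ k).const_mul _)),
          integral_const_mul, hibp]
        simp only [mul_neg, Finset.sum_neg_distrib, neg_neg, neg_mul]
      have hGs : ∀ a b : Fin n, G b a = G a b := fun a b => by
        have h := hGsym.apply a b
        rwa [star_trivial] at h
      have htrS : S.trace = ∑ i, hSherm.eigenvalues i := trace_eq_sum_eig hSherm
      have htrAM : (matA Ω * M).trace = S.trace := by
        rw [hconj, Matrix.trace_mul_comm, Units.mul_inv_cancel_left]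
      have htrace : (matA Ω * M).trace = 4 * ∑ j, ∑ k, M j k * G j k := by
        rw [hA4]
        have h0 : ((4:ℝ) • G * M).trace = ∑ i, ∑ k, (4 * G i k) * M k i := by
          simp [Matrix.trace, Matrix.diag, Matrix.mul_apply, Matrix.smul_apply]
        rw [h0, Finset.sum_comm, Finset.mul_sum]
        refine Finset.sum_congr rfl fun j _ => ?_
        rw [Finset.mul_sum]
        refine Finset.sum_congr rfl fun k _ => ?_
        rw [hGs j k]
        ring
      have h4 : 4 * ∑ j, ∑ k, M j k * G j k = ∑ i, hSherm.eigenvalues i := by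
        rw [← htrace, htrAM, htrS]
      have hfin : meanQ hbar M Ω = hbar ^ 2 / 8 * ∑ i, hSherm.eigenvalues i := by
        rw [hmean, ← h4]
        ring
      have hle : lmax ≤ ∑ i, hSherm.eigenvalues i := by
        rw [hi0]
        exact Finset.single_le_sum (fun i _ => hevnonneg i) (Finset.mem_univ i0)
      rw [ge_iff_le, hfin]
      have h8 : (0:ℝ) ≤ hbar ^ 2 / 8 := by positivity
      exact mul_le_mul_of_nonneg_left hle h8
end

section
/- Let Ω be a probability amplitude on ℝ (one degree of freedom, M = 1/m with m > 0) whose density Ω² has finite variance Δq² := ⟨q²⟩ − ⟨q⟩². Then the mean value of the quantum potential ⟨Q⟩ := −(ħ²/2m) ∫ Ω Ω'' dq satisfies ⟨Q⟩ · Δq² ≥ ħ²/(8m). -/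
open MeasureTheory Filter

/-- A continuous function dominated (in norm, outside `[-1,1]`) by an integrable function
is integrable. -/
lemma integrable_of_dominated_compl (f g : ℝ → ℝ) (hc : Continuous f)
    (hg : Integrable g) (hb : ∀ x : ℝ, 1 ≤ |x| → ‖f x‖ ≤ g x) : Integrable f := by
  have h1 : IntegrableOn f (Set.Icc (-1 : ℝ) 1) := hc.integrableOn_Icc
  have h2 : IntegrableOn f (Set.Icc (-1 : ℝ) 1)ᶜ := by
    refine Integrable.mono' hg.restrict hc.aestronglyMeasurable.restrict ?_
    filter_upwards [ae_restrict_mem measurableSet_Icc.compl] with x hx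
    refine hb x ?_
    simp only [Set.mem_compl_iff, Set.mem_Icc, not_and_or, not_le] at hx
    rcases hx with h | h
    · rw [abs_of_neg (by linarith)]; linarith
    · rw [abs_of_pos (by linarith)]; linarith
  have := h1.union h2
  rwa [Set.union_compl_self, integrableOn_univ] at this

/-- for a one-degree-of-freedom system with mass `m`, the mean value of
the quantum potential `⟨Q⟩ = -(ħ²/2m) ∫ Ω Ω''` satisfies `⟨Q⟩ ⋅ Δq² ≥ ħ²/(8m)`. -/
theorem meanQ_mul_posVar_ge {hbar m : ℝ} (hhbar : 0 < hbar) (hm : 0 < m)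
    (Ω : ℝ → ℝ) (hΩc : ContDiff ℝ 2 Ω) (hΩpos : ∀ q, 0 < Ω q)
    (hΩnorm : ∫ q, (Ω q) ^ 2 = 1)
    -- finite variance of the density Ω²
    (hq1 : Integrable (fun q => (Ω q) ^ 2 * q))
    (hq2 : Integrable (fun q => (Ω q) ^ 2 * q ^ 2))
    -- all integrals appearing converge absolutely
    (hint1 : Integrable (fun q => Ω q * deriv (deriv Ω) q))
    (hint2 : Integrable (fun q => (deriv Ω q) ^ 2))
    (hint3 : Integrable (fun q => q * Ω q * deriv Ω q))
    -- Ω and Ω' tend to 0 at infinity, fast enough that all boundary terms in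
    -- integration by parts vanish
    (hdec : Tendsto Ω (cocompact ℝ) (nhds 0))
    (hdec' : Tendsto (deriv Ω) (cocompact ℝ) (nhds 0))
    (hbd1 : ∫ q, deriv (fun x => Ω x * deriv Ω x) q = 0)
    (hbd2 : ∫ q, deriv (fun x => (Ω x) ^ 2) q = 0)
    (hbd3 : ∫ q, deriv (fun x => x * (Ω x) ^ 2) q = 0) :
    (-(hbar ^ 2 / (2 * m)) * ∫ q, Ω q * deriv (deriv Ω) q) *
        ((∫ q, (Ω q) ^ 2 * q ^ 2) - (∫ q, (Ω q) ^ 2 * q) ^ 2) ≥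
      hbar ^ 2 / (8 * m) := by
  -- basic differentiability / continuity facts
  have hΩd : Differentiable ℝ Ω := hΩc.differentiable (by norm_num)
  have hΩ'c : Continuous (deriv Ω) := hΩc.continuous_deriv (by norm_num)
  have hΩ'd : Differentiable ℝ (deriv Ω) := by
    have h2 : ContDiff ℝ 1 (deriv Ω) := (contDiff_succ_iff_deriv.mp hΩc).2.2
    exact h2.differentiable (by norm_num)
  -- integrability of Ω² and Ω·Ω'
  have hΩ2 : Integrable (fun q => (Ω q) ^ 2) := by
    refine integrable_of_dominated_compl _ (fun q => (Ω q) ^ 2 * q ^ 2)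
      (hΩd.continuous.pow 2) hq2 ?_
    intro x hx
    have h1 : (1 : ℝ) ≤ x ^ 2 := by nlinarith [sq_abs x]
    have h0 : (0 : ℝ) ≤ (Ω x) ^ 2 := sq_nonneg _
    simpa [Real.norm_eq_abs, abs_of_nonneg h0] using mul_le_mul_of_nonneg_left h1 h0
  have hΩΩ' : Integrable (fun q => Ω q * deriv Ω q) := by
    refine integrable_of_dominated_compl _ (fun q => |q * Ω q * deriv Ω q|)
      (hΩd.continuous.mul hΩ'c) hint3.abs ?_
    intro x hx
    rw [Real.norm_eq_abs]
    calc |Ω x * deriv Ω x| = 1 * |Ω x * deriv Ω x| := (one_mul _).symm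
      _ ≤ |x| * |Ω x * deriv Ω x| :=
          mul_le_mul_of_nonneg_right hx (abs_nonneg _)
      _ = |x * Ω x * deriv Ω x| := by simp [abs_mul, mul_assoc]
  -- integration by parts, step 1 :  ∫ Ω'² + ∫ Ω Ω'' = 0
  have e1 : (∫ q, (deriv Ω q) ^ 2) + ∫ q, Ω q * deriv (deriv Ω) q = 0 := by
    rw [← integral_add hint2 hint1, ← hbd1]
    congr 1; funext x
    rw [deriv_fun_mul (hΩd x) (hΩ'd x)]; ring
  -- integration by parts, step 2 :  ∫ Ω Ω' = 0
  have e2 : (∫ q, Ω q * deriv Ω q) = 0 := by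
    have h : ∫ q, (2 : ℝ) * (Ω q * deriv Ω q) = 0 := by
      rw [← hbd2]
      congr 1; funext x
      rw [((hΩd x).hasDerivAt.fun_pow 2).deriv]
      push_cast; ring
    rw [integral_const_mul] at h
    linarith
  -- integration by parts, step 3 :  ∫ q Ω Ω' = -1/2
  have e3 : (∫ q, q * Ω q * deriv Ω q) = -(1 / 2) := by
    have hc2 : Integrable (fun q => (2 : ℝ) * (q * Ω q * deriv Ω q)) := hint3.const_mul 2
    have h : ∫ q, ((Ω q) ^ 2 + 2 * (q * Ω q * deriv Ω q)) = 0 := by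
      rw [← hbd3]
      congr 1; funext x
      rw [((hasDerivAt_id' x).fun_mul ((hΩd x).hasDerivAt.fun_pow 2)).deriv]
      push_cast; ring
    rw [integral_add hΩ2 hc2, integral_const_mul, hΩnorm] at h
    linarith
  -- Cauchy–Schwarz via the discriminant of a nonnegative quadratic
  set a : ℝ := ∫ q, (Ω q) ^ 2 * q with ha
  set F : ℝ := ∫ q, ((q - a) * Ω q) ^ 2 with hF
  set G : ℝ := ∫ q, ((q - a) * Ω q) * deriv Ω q with hG
  set H : ℝ := ∫ q, (deriv Ω q) ^ 2 with hH
  have hsub1 : Integrable (fun q => (Ω q) ^ 2 * q ^ 2 - 2 * a * ((Ω q) ^ 2 * q)) :=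
    hq2.sub (hq1.const_mul (2 * a))
  have hsub2 : Integrable (fun q => a ^ 2 * (Ω q) ^ 2) := hΩ2.const_mul (a ^ 2)
  have hf2 : Integrable (fun q => ((q - a) * Ω q) ^ 2) := by
    have heq : (fun q => ((q - a) * Ω q) ^ 2)
        = fun q => (Ω q) ^ 2 * q ^ 2 - 2 * a * ((Ω q) ^ 2 * q) + a ^ 2 * (Ω q) ^ 2 :=
      funext fun q => by ring
    rw [heq]
    exact hsub1.add hsub2
  have hsub3 : Integrable (fun q => a * (Ω q * deriv Ω q)) := hΩΩ'.const_mul a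
  have hfg : Integrable (fun q => ((q - a) * Ω q) * deriv Ω q) := by
    have heq : (fun q => ((q - a) * Ω q) * deriv Ω q)
        = fun q => q * Ω q * deriv Ω q - a * (Ω q * deriv Ω q) :=
      funext fun q => by ring
    rw [heq]
    exact hint3.sub hsub3
  have hquad : ∀ t : ℝ, 0 ≤ F * (t * t) + (2 * G) * t + H := by
    intro t
    have h1 : Integrable (fun q => (t * t) * (((q - a) * Ω q) ^ 2)) := hf2.const_mul _
    have h2 : Integrable (fun q => (2 * t) * (((q - a) * Ω q) * deriv Ω q)) :=
      hfg.const_mul _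
    have h12 : Integrable (fun q => (t * t) * (((q - a) * Ω q) ^ 2)
        + (2 * t) * (((q - a) * Ω q) * deriv Ω q)) := h1.add h2
    have hI : ∫ q, (t * ((q - a) * Ω q) + deriv Ω q) ^ 2
        = F * (t * t) + (2 * G) * t + H := by
      have heq : (fun q => (t * ((q - a) * Ω q) + deriv Ω q) ^ 2)
          = fun q => ((t * t) * (((q - a) * Ω q) ^ 2)
              + (2 * t) * (((q - a) * Ω q) * deriv Ω q)) + (deriv Ω q) ^ 2 :=
        funext fun q => by ring
      rw [heq, integral_add h12 hint2, integral_add h1 h2,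
        integral_const_mul, integral_const_mul]
      rw [hF, hG, hH]; ring
    rw [← hI]
    exact integral_nonneg fun q => sq_nonneg _
  have hdisc := discrim_le_zero hquad
  rw [discrim] at hdisc
  -- value of G
  have hGval : G = -(1 / 2) := by
    rw [hG]
    have heq : (fun q => ((q - a) * Ω q) * deriv Ω q)
        = fun q => q * Ω q * deriv Ω q - a * (Ω q * deriv Ω q) :=
      funext fun q => by ring
    rw [heq, integral_sub hint3 hsub3, integral_const_mul, e2, e3]
    ring
  -- value of F : it is the variance
  have hFval : F = (∫ q, (Ω q) ^ 2 * q ^ 2) - a ^ 2 := by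
    rw [hF]
    have heq : (fun q => ((q - a) * Ω q) ^ 2)
        = fun q => (Ω q) ^ 2 * q ^ 2 - 2 * a * ((Ω q) ^ 2 * q) + a ^ 2 * (Ω q) ^ 2 :=
      funext fun q => by ring
    rw [heq, integral_add hsub1 hsub2, integral_sub hq2 (hq1.const_mul (2 * a)),
      integral_const_mul, integral_const_mul, hΩnorm, ← ha]
    ring
  have hHnn : 0 ≤ H := integral_nonneg fun q => sq_nonneg _
  have hIval : (∫ q, Ω q * deriv (deriv Ω) q) = -H := by
    rw [hH]; linarith
  rw [hIval, ← hFval]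
  have hc : 0 < hbar ^ 2 / (2 * m) := by positivity
  have hFH : 1 / 4 ≤ F * H := by nlinarith [hdisc, hGval]
  have h4 : hbar ^ 2 / (8 * m) = hbar ^ 2 / (2 * m) * (1 / 4) := by
    field_simp; ring
  rw [ge_iff_le, show -(hbar ^ 2 / (2 * m)) * -H * F = hbar ^ 2 / (2 * m) * (F * H) by ring,
    h4]
  exact mul_le_mul_of_nonneg_left hFH hc.le
end

section
/- Let ψ = Ω e^{iS/ħ} be a pure state on ℝ (one degree of freedom) with finite position variance Δq² := ⟨q²⟩ − ⟨q⟩² and finite momentum variance Δp² := ħ² ∫ |ψ'|² dq − p², where p := ∫ ψ̄(−iħψ') dq. Then Δp² Δq² − Cov(S',S') Δq² − ħ²/4 ≥ 0, where Cov(S',S') is the variance of S' with respect to the probability density Ω². In particular Δp² Δq² ≥ ħ²/4. -/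
open MeasureTheory Filter

/-- Mean value `⟨T⟩ = ∫ Ω² T` with respect to the probability density `Ω²` on `ℝ`. -/
noncomputable def expec1 (Ω T : ℝ → ℝ) : ℝ := ∫ q, (Ω q) ^ 2 * T q

/-- Covariance `Cov(T,T') = ⟨TT'⟩ - ⟨T⟩⟨T'⟩` with respect to `Ω²`. -/
noncomputable def cov1 (Ω T T' : ℝ → ℝ) : ℝ :=
  expec1 Ω (fun q => T q * T' q) - expec1 Ω T * expec1 Ω T'

/-- The pure state `ψ = Ω e^{iS/ħ}` on `ℝ`. -/
noncomputable def pureState1 (hbar : ℝ) (Ω S : ℝ → ℝ) (q : ℝ) : ℂ :=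
  (Ω q : ℂ) * Complex.exp (Complex.I * (S q : ℂ) / (hbar : ℂ))

/-- The momentum mean `p = ∫ ψ̄ (-iħ ψ')`. -/
noncomputable def momMean1 (hbar : ℝ) (Ω S : ℝ → ℝ) : ℂ :=
  ∫ q, (starRingEnd ℂ) (pureState1 hbar Ω S q) *
    (-(hbar : ℂ) * Complex.I * deriv (pureState1 hbar Ω S) q)


lemma integrable_mul_sq {f g : ℝ → ℝ} (hf : Continuous f) (hg : Continuous g)
    (hf2 : Integrable (fun q => f q ^ 2)) (hg2 : Integrable (fun q => g q ^ 2)) :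
    Integrable (fun q => f q * g q) := by
  refine ((hf2.add hg2).div_const 2).mono' ((hf.mul hg).aestronglyMeasurable) ?_
  filter_upwards with q
  simp only [Pi.add_apply]
  rw [Real.norm_eq_abs, abs_mul]
  nlinarith [sq_nonneg (|f q| - |g q|), abs_nonneg (f q), abs_nonneg (g q),
    sq_abs (f q), sq_abs (g q)]

lemma integrable_sq_of_base {Ω : ℝ → ℝ} (hc : Continuous Ω)
    (h3 : Integrable (fun q => (Ω q) ^ 2 * q ^ 2)) :
    Integrable (fun q => (Ω q) ^ 2) := by
  have hind : Integrable ((Set.Icc (-1:ℝ) 1).indicator (fun q => (Ω q) ^ 2)) := by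
    refine (IntegrableOn.integrable_indicator ?_ measurableSet_Icc)
    exact ((hc.pow 2).integrableOn_Icc)
  refine (h3.add hind).mono' ((hc.pow 2).aestronglyMeasurable) ?_
  filter_upwards with q
  simp only [Pi.add_apply]
  rw [Real.norm_eq_abs, abs_of_nonneg (sq_nonneg _)]
  by_cases hq : q ∈ Set.Icc (-1:ℝ) 1
  · rw [Set.indicator_of_mem hq]
    nlinarith [sq_nonneg (Ω q), sq_nonneg q, mul_nonneg (sq_nonneg (Ω q)) (sq_nonneg q)]
  · rw [Set.indicator_of_notMem hq]
    simp only [Set.mem_Icc, not_and_or, not_le] at hq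
    have h1 : 1 ≤ q ^ 2 := by rcases hq with h | h <;> nlinarith
    nlinarith [sq_nonneg (Ω q)]

lemma cs_key {I V : ℝ} (h : ∀ t : ℝ, 0 ≤ t ^ 2 * I - t + V) : 1 / 4 ≤ I * V := by
  have hIpos : 0 < I := by
    rcases le_or_gt I 0 with hI | hI
    · exfalso
      have ht := h (max (V + 1) 1)
      have h1 : (1:ℝ) ≤ max (V + 1) 1 := le_max_right _ _
      have h2 : V + 1 ≤ max (V + 1) 1 := le_max_left _ _
      nlinarith [mul_nonpos_of_nonneg_of_nonpos (sq_nonneg (max (V + 1) 1)) hI]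
    · exact hI
  have h2 := h (1 / (2 * I))
  have h4 : (1 / (2 * I)) ^ 2 * I = 1 / (4 * I) := by field_simp; ring
  rw [h4] at h2
  have h5 : 1 / (4 * I) ≤ V := by
    have e : 1 / (2 * I) = 2 * (1 / (4 * I)) := by field_simp; ring
    linarith [e ▸ h2]
  calc 1 / 4 = I * (1 / (4 * I)) := by field_simp
    _ ≤ I * V := by exact mul_le_mul_of_nonneg_left h5 hIpos.le

lemma hasDerivAt_psi (hbar : ℝ) (Ω S : ℝ → ℝ) (hΩc : ContDiff ℝ 2 Ω) (hSc : ContDiff ℝ 2 S) (q : ℝ) :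
    HasDerivAt (pureState1 hbar Ω S)
      (((Complex.ofReal (deriv Ω q)) + Complex.I * (Ω q : ℂ) * (Complex.ofReal (deriv S q)) / (hbar : ℂ)) *
        Complex.exp (Complex.I * (S q : ℂ) / (hbar : ℂ))) q := by
  have hΩ : HasDerivAt (fun x => ((Ω x : ℂ))) ((Complex.ofReal (deriv Ω q))) q :=
    (((hΩc.differentiable (by norm_num)) q).hasDerivAt).ofReal_comp
  have hS : HasDerivAt (fun x => ((S x : ℂ))) ((Complex.ofReal (deriv S q))) q :=
    (((hSc.differentiable (by norm_num)) q).hasDerivAt).ofReal_comp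
  have he : HasDerivAt (fun x => Complex.I * (S x : ℂ) / (hbar : ℂ))
      (Complex.I * (Complex.ofReal (deriv S q)) / (hbar : ℂ)) q := (hS.const_mul Complex.I).div_const _
  have hexp := he.cexp
  have := hΩ.mul hexp
  convert this using 1
  · rfl
  · rfl
  ring

lemma normSq_deriv_psi (hbar : ℝ) (hh : hbar ≠ 0) (Ω S : ℝ → ℝ) (hΩc : ContDiff ℝ 2 Ω) (hSc : ContDiff ℝ 2 S) (q : ℝ) :
    Complex.normSq (deriv (pureState1 hbar Ω S) q)
      = (deriv Ω q) ^ 2 + (Ω q * deriv S q / hbar) ^ 2 := by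
  rw [(hasDerivAt_psi hbar Ω S hΩc hSc q).deriv, Complex.normSq_mul]
  have h1 : (Complex.ofReal (deriv Ω q)) + Complex.I * (Ω q : ℂ) * (Complex.ofReal (deriv S q)) / (hbar : ℂ)
      = Complex.ofReal (deriv Ω q) + Complex.ofReal (Ω q * deriv S q / hbar) * Complex.I := by
    push_cast; ring
  have h2 : Complex.I * (S q : ℂ) / (hbar : ℂ) = Complex.ofReal (S q / hbar) * Complex.I := by
    push_cast; ring
  rw [h1, h2, Complex.normSq_add_mul_I]
  have h3 : Complex.normSq (Complex.exp (Complex.ofReal (S q / hbar) * Complex.I)) = 1 := by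
    rw [Complex.normSq_eq_norm_sq, Complex.norm_exp]
    simp
  rw [h3]; ring

lemma conj_mul_deriv_psi (hbar : ℝ) (hh : hbar ≠ 0) (Ω S : ℝ → ℝ) (hΩc : ContDiff ℝ 2 Ω) (hSc : ContDiff ℝ 2 S) (q : ℝ) :
    (starRingEnd ℂ) (pureState1 hbar Ω S q) *
      (-(hbar : ℂ) * Complex.I * deriv (pureState1 hbar Ω S) q)
      = Complex.ofReal ((Ω q)^2 * deriv S q) + Complex.ofReal (-(hbar) * (Ω q * deriv Ω q)) * Complex.I := by
  rw [(hasDerivAt_psi hbar Ω S hΩc hSc q).deriv]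
  unfold pureState1
  have h2 : Complex.I * ((S q : ℝ) : ℂ) / (hbar : ℂ) = Complex.ofReal (S q / hbar) * Complex.I := by
    push_cast; ring
  have key : (starRingEnd ℂ) (Complex.exp (Complex.I * (S q : ℂ) / (hbar : ℂ))) *
      Complex.exp (Complex.I * (S q : ℂ) / (hbar : ℂ)) = 1 := by
    rw [← Complex.exp_conj, ← Complex.exp_add, h2]
    have : (starRingEnd ℂ) (Complex.ofReal (S q / hbar) * Complex.I) +
        Complex.ofReal (S q / hbar) * Complex.I = 0 := by
      simp [map_mul, Complex.conj_ofReal, Complex.conj_I]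
    rw [this, Complex.exp_zero]
  rw [map_mul, Complex.conj_ofReal]
  have hre : ((Ω q : ℝ) : ℂ) * (starRingEnd ℂ) (Complex.exp (Complex.I * (S q : ℂ) / (hbar : ℂ))) *
      (-(hbar : ℂ) * Complex.I * ((Complex.ofReal (deriv Ω q) +
        Complex.I * ((Ω q : ℝ) : ℂ) * Complex.ofReal (deriv S q) / (hbar : ℂ)) *
        Complex.exp (Complex.I * (S q : ℂ) / (hbar : ℂ))))
      = ((Ω q : ℝ) : ℂ) * (-(hbar : ℂ) * Complex.I * (Complex.ofReal (deriv Ω q) +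
        Complex.I * ((Ω q : ℝ) : ℂ) * Complex.ofReal (deriv S q) / (hbar : ℂ))) *
        ((starRingEnd ℂ) (Complex.exp (Complex.I * (S q : ℂ) / (hbar : ℂ))) *
          Complex.exp (Complex.I * (S q : ℂ) / (hbar : ℂ))) := by ring
  rw [hre, key, mul_one]
  have hhc : (hbar : ℂ) ≠ 0 := by exact_mod_cast hh
  push_cast
  field_simp
  linear_combination (-((Ω q : ℂ))^2 * (Complex.ofReal (deriv S q))) * Complex.I_sq

/-- the strengthened one-dimensional uncertainty relation
`Δp² Δq² - Cov(S',S') Δq² - ħ²/4 ≥ 0`, and in particular `Δp² Δq² ≥ ħ²/4`. -/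
theorem strengthened_uncertainty_1d (hbar : ℝ) (hhbar : 0 < hbar)
    (Ω : ℝ → ℝ) (hΩc : ContDiff ℝ 2 Ω) (hΩpos : ∀ q, 0 < Ω q)
    (hΩnorm : ∫ q, (Ω q) ^ 2 = 1)
    (S : ℝ → ℝ) (hSc : ContDiff ℝ 2 S)
    -- integrability hypotheses
    (hint1 : Integrable (fun q => (Ω q) ^ 2 * deriv S q))
    (hint2 : Integrable (fun q => (Ω q) ^ 2 * (deriv S q) ^ 2))
    (hint3 : Integrable (fun q => (Ω q) ^ 2 * q ^ 2))
    (hint4 : Integrable (fun q => (Ω q) ^ 2 * q))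
    (hint5 : Integrable (fun q => q * (Ω q) ^ 2 * deriv S q))
    (hint6 : Integrable (fun q => Complex.normSq (deriv (pureState1 hbar Ω S) q)))
    (hint7 : Integrable (fun q => (deriv Ω q) ^ 2))
    (hint8 : Integrable (fun q => (starRingEnd ℂ) (pureState1 hbar Ω S q) *
      (-(hbar : ℂ) * Complex.I * deriv (pureState1 hbar Ω S) q)))
    -- all boundary terms in integration by parts vanish
    (hbd1 : ∫ q, deriv (fun x => (Ω x) ^ 2) q = 0)
    (hbd2 : ∫ q, deriv (fun x => x * (Ω x) ^ 2) q = 0)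
    (hbd3 : ∫ q, deriv (fun x => Ω x * deriv Ω x) q = 0) :
    (hbar ^ 2 * (∫ q, Complex.normSq (deriv (pureState1 hbar Ω S) q)) -
          ((momMean1 hbar Ω S) ^ 2).re) *
          ((∫ q, (Ω q) ^ 2 * q ^ 2) - (∫ q, (Ω q) ^ 2 * q) ^ 2) -
        cov1 Ω (deriv S) (deriv S) *
          ((∫ q, (Ω q) ^ 2 * q ^ 2) - (∫ q, (Ω q) ^ 2 * q) ^ 2) -
        hbar ^ 2 / 4 ≥ 0 ∧
    (hbar ^ 2 * (∫ q, Complex.normSq (deriv (pureState1 hbar Ω S) q)) -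
          ((momMean1 hbar Ω S) ^ 2).re) *
        ((∫ q, (Ω q) ^ 2 * q ^ 2) - (∫ q, (Ω q) ^ 2 * q) ^ 2) ≥ hbar ^ 2 / 4 := by
    classical
  have hh : hbar ≠ 0 := ne_of_gt hhbar
  have hΩcont : Continuous Ω := hΩc.continuous
  have hΩ'cont : Continuous (deriv Ω) := hΩc.continuous_deriv one_le_two
  have hΩd : Differentiable ℝ Ω := hΩc.differentiable two_ne_zero
  have hΩsq : Integrable (fun q => (Ω q) ^ 2) := integrable_sq_of_base hΩcont hint3
  have hΩΩ' : Integrable (fun q => Ω q * deriv Ω q) :=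
    integrable_mul_sq hΩcont hΩ'cont hΩsq hint7
  have hqΩ2 : Integrable (fun q => (q * Ω q) ^ 2) := by
    have e : (fun q => (q * Ω q) ^ 2) = fun q => (Ω q) ^ 2 * q ^ 2 := by funext q; ring
    rw [e]; exact hint3
  have hqΩΩ' : Integrable (fun q => q * (Ω q * deriv Ω q)) := by
    have h := integrable_mul_sq (continuous_id.mul hΩcont) hΩ'cont hqΩ2 hint7
    simp only [Pi.mul_apply, id_eq] at h
    have e : (fun q => q * Ω q * deriv Ω q) = fun q => q * (Ω q * deriv Ω q) := by
      funext q; ring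
    rwa [e] at h
  have hderiv_sq : ∀ x, deriv (fun y => (Ω y) ^ 2) x = 2 * (Ω x * deriv Ω x) := by
    intro x
    rw [((hΩd x).hasDerivAt.fun_pow 2).deriv]
    push_cast; ring
  have hderiv_xsq : ∀ x, deriv (fun y => y * (Ω y) ^ 2) x
      = (Ω x) ^ 2 + 2 * (x * (Ω x * deriv Ω x)) := by
    intro x
    have h : HasDerivAt (fun y : ℝ => y * (Ω y) ^ 2)
        (1 * (Ω x) ^ 2 + x * ((2 : ℕ) * Ω x ^ (2 - 1) * deriv Ω x)) x :=
      (hasDerivAt_id x).mul ((hΩd x).hasDerivAt.pow 2)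
    rw [h.deriv]
    push_cast; ring
  -- ∫ Ω Ω' = 0
  have E0 : ∫ q, Ω q * deriv Ω q = 0 := by
    simp only [hderiv_sq] at hbd1
    rw [integral_const_mul] at hbd1
    linarith
  -- ∫ q Ω Ω' = -1/2
  have E1 : ∫ q, q * (Ω q * deriv Ω q) = -(1/2) := by
    simp only [hderiv_xsq] at hbd2
    rw [integral_add hΩsq (hqΩΩ'.const_mul 2), integral_const_mul, hΩnorm] at hbd2
    linarith
  -- the momentum mean is real and equals ⟨S'⟩
  have hmm : momMean1 hbar Ω S = Complex.ofReal (∫ q, (Ω q) ^ 2 * deriv S q) := by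
    unfold momMean1
    simp only [conj_mul_deriv_psi hbar hh Ω S hΩc hSc]
    have hi1 : Integrable (fun q => Complex.ofReal ((Ω q) ^ 2 * deriv S q)) := hint1.ofReal
    have hi2 : Integrable (fun q => Complex.ofReal (-hbar * (Ω q * deriv Ω q)) * Complex.I) :=
      ((hΩΩ'.const_mul (-hbar)).ofReal).mul_const Complex.I
    rw [integral_add hi1 hi2]
    have e2 : (fun q => (Complex.ofReal (-hbar * (Ω q * deriv Ω q))) * Complex.I)
        = fun q => (Complex.ofReal (-hbar * (Ω q * deriv Ω q))) • Complex.I := by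
      funext q; rw [smul_eq_mul]
    have hu : (∫ q, Complex.ofReal ((Ω q) ^ 2 * deriv S q))
        = Complex.ofReal (∫ q, (Ω q) ^ 2 * deriv S q) := integral_ofReal
    have hv : (∫ q, Complex.ofReal (-hbar * (Ω q * deriv Ω q)))
        = Complex.ofReal (∫ q, -hbar * (Ω q * deriv Ω q)) := integral_ofReal
    rw [e2, integral_smul_const, hu, hv, integral_const_mul, E0]
    simp
  have p2 : ((momMean1 hbar Ω S) ^ 2).re = (∫ q, (Ω q) ^ 2 * deriv S q) ^ 2 := by
    rw [hmm, ← Complex.ofReal_pow, Complex.ofReal_re]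
  -- the kinetic integral
  have hns : ∫ q, Complex.normSq (deriv (pureState1 hbar Ω S) q)
      = (∫ q, (deriv Ω q) ^ 2) + (1 / hbar ^ 2) * (∫ q, (Ω q) ^ 2 * (deriv S q) ^ 2) := by
    simp only [normSq_deriv_psi hbar hh Ω S hΩc hSc]
    have he : (fun q => (Ω q * deriv S q / hbar) ^ 2)
        = fun q => (1 / hbar ^ 2) * ((Ω q) ^ 2 * (deriv S q) ^ 2) := by
      funext q; field_simp
    have hint2' : Integrable (fun q => (Ω q * deriv S q / hbar) ^ 2) := by
      rw [he]; exact hint2.const_mul _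
    rw [integral_add hint7 hint2', he, integral_const_mul]
  -- covariance
  have hcov : cov1 Ω (deriv S) (deriv S)
      = (∫ q, (Ω q) ^ 2 * (deriv S q) ^ 2) - (∫ q, (Ω q) ^ 2 * deriv S q) ^ 2 := by
    unfold cov1 expec1
    have e : (fun q => (Ω q) ^ 2 * (deriv S q * deriv S q))
        = fun q => (Ω q) ^ 2 * (deriv S q) ^ 2 := by funext q; ring
    rw [e]; ring
  -- variance of S' is nonnegative
  have hvar : 0 ≤ (∫ q, (Ω q) ^ 2 * (deriv S q) ^ 2) - (∫ q, (Ω q) ^ 2 * deriv S q) ^ 2 := by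
    set m := ∫ q, (Ω q) ^ 2 * deriv S q with hm
    have h0 : 0 ≤ ∫ q, (Ω q) ^ 2 * (deriv S q - m) ^ 2 :=
      integral_nonneg fun q => by positivity
    have hexp : (fun q => (Ω q) ^ 2 * (deriv S q - m) ^ 2)
        = fun q => ((Ω q) ^ 2 * (deriv S q) ^ 2 - (2 * m) * ((Ω q) ^ 2 * deriv S q))
            + m ^ 2 * (Ω q) ^ 2 := by funext q; ring
    have hi1 : Integrable (fun q => (Ω q) ^ 2 * (deriv S q) ^ 2
        - (2 * m) * ((Ω q) ^ 2 * deriv S q)) := hint2.sub (hint1.const_mul (2 * m))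
    have hi2 : Integrable (fun q => m ^ 2 * (Ω q) ^ 2) := hΩsq.const_mul (m ^ 2)
    rw [hexp, integral_add hi1 hi2,
      integral_sub hint2 (hint1.const_mul (2 * m)), integral_const_mul, integral_const_mul,
      hΩnorm] at h0
    nlinarith [h0]
  -- Cauchy–Schwarz ingredients
  set a := ∫ q, (Ω q) ^ 2 * q with ha
  set Q2 := ∫ q, (Ω q) ^ 2 * q ^ 2 with hQ2
  have hg2exp : (fun q => ((q - a) * Ω q) ^ 2)
      = fun q => ((Ω q) ^ 2 * q ^ 2 - (2 * a) * ((Ω q) ^ 2 * q)) + a ^ 2 * (Ω q) ^ 2 := by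
    funext q; ring
  have hgi1 : Integrable (fun q => (Ω q) ^ 2 * q ^ 2 - (2 * a) * ((Ω q) ^ 2 * q)) :=
    hint3.sub (hint4.const_mul _)
  have hgi2 : Integrable (fun q => a ^ 2 * (Ω q) ^ 2) := hΩsq.const_mul _
  have hg2 : Integrable (fun q => ((q - a) * Ω q) ^ 2) := by
    rw [hg2exp]
    exact hgi1.add hgi2
  have hgcont : Continuous (fun q : ℝ => (q - a) * Ω q) :=
    (continuous_id.sub continuous_const).mul hΩcont
  have hfg : Integrable (fun q => deriv Ω q * ((q - a) * Ω q)) :=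
    integrable_mul_sq hΩ'cont hgcont hint7 hg2
  have hfgval : ∫ q, deriv Ω q * ((q - a) * Ω q) = -(1/2) := by
    have e : (fun q => deriv Ω q * ((q - a) * Ω q))
        = fun q => q * (Ω q * deriv Ω q) - a * (Ω q * deriv Ω q) := by funext q; ring
    rw [e, integral_sub hqΩΩ' (hΩΩ'.const_mul a), integral_const_mul, E0, E1]
    ring
  have hVval : ∫ q, ((q - a) * Ω q) ^ 2 = Q2 - a ^ 2 := by
    rw [hg2exp, integral_add hgi1 hgi2,
      integral_sub hint3 (hint4.const_mul _), integral_const_mul, integral_const_mul, hΩnorm]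
    rw [← ha, ← hQ2]; ring
  have hVnn : 0 ≤ Q2 - a ^ 2 := by
    rw [← hVval]; exact integral_nonneg fun q => sq_nonneg _
  have hquad : ∀ t : ℝ, 0 ≤ t ^ 2 * (∫ q, (deriv Ω q) ^ 2) - t + (Q2 - a ^ 2) := by
    intro t
    have h0 : 0 ≤ ∫ q, (t * deriv Ω q + (q - a) * Ω q) ^ 2 :=
      integral_nonneg fun q => sq_nonneg _
    have hexp : (fun q => (t * deriv Ω q + (q - a) * Ω q) ^ 2)
        = fun q => (t ^ 2 * (deriv Ω q) ^ 2 + (2 * t) * (deriv Ω q * ((q - a) * Ω q)))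
            + ((q - a) * Ω q) ^ 2 := by funext q; ring
    have hq1 : Integrable (fun q => t ^ 2 * (deriv Ω q) ^ 2) := hint7.const_mul _
    have hq2 : Integrable (fun q => (2 * t) * (deriv Ω q * ((q - a) * Ω q))) :=
      hfg.const_mul _
    have hq12 : Integrable (fun q => t ^ 2 * (deriv Ω q) ^ 2
        + (2 * t) * (deriv Ω q * ((q - a) * Ω q))) := hq1.add hq2
    rw [hexp, integral_add hq12 hg2,
      integral_add hq1 hq2, integral_const_mul,
      integral_const_mul, hfgval, hVval] at h0
    linarith
  have hCS : 1 / 4 ≤ (∫ q, (deriv Ω q) ^ 2) * (Q2 - a ^ 2) := cs_key hquad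
  -- put everything together
  rw [hns, p2, hcov]
  set I' := ∫ q, (deriv Ω q) ^ 2 with hI'
  set A := ∫ q, (Ω q) ^ 2 * (deriv S q) ^ 2 with hA
  set m := ∫ q, (Ω q) ^ 2 * deriv S q with hm
  have hcancel : hbar ^ 2 * (1 / hbar ^ 2) = 1 := by field_simp
  have main : (hbar ^ 2 * (I' + 1 / hbar ^ 2 * A) - m ^ 2) * (Q2 - a ^ 2)
      - (A - m ^ 2) * (Q2 - a ^ 2) - hbar ^ 2 / 4
      = hbar ^ 2 * (I' * (Q2 - a ^ 2) - 1 / 4) := by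
    linear_combination ((Q2 - a ^ 2) * A) * hcancel
  constructor
  · rw [ge_iff_le, ← sub_nonneg] at *
    calc (0:ℝ) ≤ hbar ^ 2 * (I' * (Q2 - a ^ 2) - 1 / 4) := by
          apply mul_nonneg (sq_nonneg hbar); linarith
      _ = _ := by rw [← main]; ring
  · have h1 : hbar ^ 2 * (I' * (Q2 - a ^ 2) - 1 / 4) ≥ 0 := by
      apply mul_nonneg (sq_nonneg hbar); linarith
    have h2 : (A - m ^ 2) * (Q2 - a ^ 2) ≥ 0 := mul_nonneg hvar hVnn
    linarith [main, h1, h2]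
end
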